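/- Let (L, [·,·], α, β) be a regular BiHom-Lie algebra. The direct sum Der(L) = ⊕_{k,l} Der_{α^k β^l}(L) of all α^k β^l-derivations, equipped with the commutator bracket [D, D'] = D∘D' − D'∘D, is a Lie algebra. -/

import Mathlib

section Aux

variable {K : Type*} [Field K] {L : Type*} [AddCommGroup L] [Module K L]

lemma aux_zpow_mor (br : L →ₗ[K] L →ₗ[K] L) (g : L ≃ₗ[K] L)
    (h : ∀ a b, g (br a b) = br (g a) (g b)) :
    ∀ (k : ℤ) (a b : L), (g ^ k) (br a b) = br ((g ^ k) a) ((g ^ k) b) := by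
  have hinv : ∀ a b, g.symm (br a b) = br (g.symm a) (g.symm b) := by
    intro a b
    apply g.injective
    rw [h, g.apply_symm_apply, g.apply_symm_apply, g.apply_symm_apply]
  intro k
  induction k using Int.induction_on with
  | zero => simp
  | succ n ih =>
    intro a b
    have : g ^ ((n : ℤ) + 1) = g ^ (n : ℤ) * g := by rw [zpow_add_one]
    rw [this]
    show (g ^ (n : ℤ)) (g (br a b)) = _
    rw [h, ih]
    rfl
  | pred n ih =>
    intro a b
    have : g ^ (-(n : ℤ) - 1) = g ^ (-(n : ℤ)) * g⁻¹ := by rw [zpow_sub_one]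
    rw [this]
    show (g ^ (-(n : ℤ))) (g.symm (br a b)) = _
    rw [hinv, ih]
    rfl

lemma aux_zpow_comm (D : Module.End K L) (g : L ≃ₗ[K] L)
    (h : ∀ v, D (g v) = g (D v)) :
    ∀ (k : ℤ) (v : L), D ((g ^ k) v) = (g ^ k) (D v) := by
  have hinv : ∀ v, D (g.symm v) = g.symm (D v) := by
    intro v
    apply g.injective
    rw [← h, g.apply_symm_apply, g.apply_symm_apply]
  intro k
  induction k using Int.induction_on with
  | zero => simp
  | succ n ih =>
    intro v
    have : g ^ ((n : ℤ) + 1) = g ^ (n : ℤ) * g := by rw [zpow_add_one]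
    rw [this]
    show D ((g ^ (n : ℤ)) (g v)) = (g ^ (n : ℤ)) (g (D v))
    rw [ih, h]
  | pred n ih =>
    intro v
    have : g ^ (-(n : ℤ) - 1) = g ^ (-(n : ℤ)) * g⁻¹ := by rw [zpow_sub_one]
    rw [this]
    show D ((g ^ (-(n : ℤ))) (g.symm v)) = (g ^ (-(n : ℤ))) (g.symm (D v))
    rw [ih, hinv]

end Aux

/-- `Der(L) = ⊕_{k,l} Der_{αᵏβˡ}(L)`, with the commutator bracket, is a Lie
algebra (i.e. the span of all the `αᵏβˡ`-derivations is closed under the commutator, and hence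
a Lie subalgebra of `End(L)`). -/
theorem stmt_7 {K : Type*} [Field K] {L : Type*} [AddCommGroup L] [Module K L]
    (br : L →ₗ[K] L →ₗ[K] L) (α β : L ≃ₗ[K] L)
    (hcomm : ∀ a, α (β a) = β (α a))
    (hαm : ∀ a b, α (br a b) = br (α a) (α b))
    (hβm : ∀ a b, β (br a b) = br (β a) (β b))
    (hskew : ∀ a a', br (β a) (α a') = - br (β a') (α a))
    (hjac : ∀ a a' a'', br (β (β a)) (br (β a') (α a''))
      + br (β (β a')) (br (β a'') (α a))
      + br (β (β a'')) (br (β a) (α a')) = 0)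
    (Der : ℤ → ℤ → Set (Module.End K L))
    (hDer : ∀ k l, Der k l = {D : Module.End K L |
      (∀ v, D (α v) = α (D v)) ∧ (∀ v, D (β v) = β (D v)) ∧
      (∀ v w, D (br v w) = br (D v) ((α ^ k * β ^ l) w) + br ((α ^ k * β ^ l) v) (D w))})
    (S : Submodule K (Module.End K L))
    (hS : S = Submodule.span K (⋃ k : ℤ, ⋃ l : ℤ, Der k l)) :
    ∀ D ∈ S, ∀ D' ∈ S, D * D' - D' * D ∈ S := by
  subst hS
  set s : Set (Module.End K L) := ⋃ k : ℤ, ⋃ l : ℤ, Der k l with hs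
  -- α and β commute as elements of the automorphism group
  have hc : Commute α β := by
    ext a; exact hcomm a
  -- key closure of the generating set under commutators
  have key : ∀ D ∈ s, ∀ D' ∈ s, D * D' - D' * D ∈ s := by
    intro D hD D' hD'
    simp only [hs, Set.mem_iUnion] at hD hD'
    obtain ⟨k, l, hD⟩ := hD
    obtain ⟨k', l', hD'⟩ := hD'
    rw [hDer] at hD hD'
    obtain ⟨hDα, hDβ, hDbr⟩ := hD
    obtain ⟨hD'α, hD'β, hD'br⟩ := hD'
    simp only [hs, Set.mem_iUnion]
    refine ⟨k + k', l + l', ?_⟩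
    rw [hDer]
    -- commutation with powers
    have hDαk : ∀ (m : ℤ) v, D ((α ^ m) v) = (α ^ m) (D v) := aux_zpow_comm D α hDα
    have hDβl : ∀ (m : ℤ) v, D ((β ^ m) v) = (β ^ m) (D v) := aux_zpow_comm D β hDβ
    have hD'αk : ∀ (m : ℤ) v, D' ((α ^ m) v) = (α ^ m) (D' v) := aux_zpow_comm D' α hD'α
    have hD'βl : ∀ (m : ℤ) v, D' ((β ^ m) v) = (β ^ m) (D' v) := aux_zpow_comm D' β hD'β
    have hDγ' : ∀ v, D ((α ^ k' * β ^ l') v) = (α ^ k' * β ^ l') (D v) := by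
      intro v
      show D ((α ^ k') ((β ^ l') v)) = (α ^ k') ((β ^ l') (D v))
      rw [hDαk, hDβl]
    have hD'γ : ∀ v, D' ((α ^ k * β ^ l) v) = (α ^ k * β ^ l) (D' v) := by
      intro v
      show D' ((α ^ k) ((β ^ l) v)) = (α ^ k) ((β ^ l) (D' v))
      rw [hD'αk, hD'βl]
    have hγγ' : ∀ v, (α ^ k * β ^ l) ((α ^ k' * β ^ l') v)
        = (α ^ (k + k') * β ^ (l + l')) v := by
      intro v
      have : (α ^ k * β ^ l) * (α ^ k' * β ^ l') = α ^ (k + k') * β ^ (l + l') := by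
        rw [(hc.symm.zpow_zpow l k').mul_mul_mul_comm, zpow_add, zpow_add]
      calc (α ^ k * β ^ l) ((α ^ k' * β ^ l') v)
          = ((α ^ k * β ^ l) * (α ^ k' * β ^ l')) v := rfl
        _ = (α ^ (k + k') * β ^ (l + l')) v := by rw [this]
    have hγ'γ : ∀ v, (α ^ k' * β ^ l') ((α ^ k * β ^ l) v)
        = (α ^ (k + k') * β ^ (l + l')) v := by
      intro v
      have : (α ^ k' * β ^ l') * (α ^ k * β ^ l) = α ^ (k + k') * β ^ (l + l') := by
        rw [(hc.symm.zpow_zpow l' k).mul_mul_mul_comm, ← zpow_add, ← zpow_add,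
          add_comm k' k, add_comm l' l, zpow_add, zpow_add]
      calc (α ^ k' * β ^ l') ((α ^ k * β ^ l) v)
          = ((α ^ k' * β ^ l') * (α ^ k * β ^ l)) v := rfl
        _ = (α ^ (k + k') * β ^ (l + l')) v := by rw [this]
    refine ⟨?_, ?_, ?_⟩
    · intro v
      show D (D' (α v)) - D' (D (α v)) = α (D (D' v) - D' (D v))
      rw [hD'α, hDα, hDα, hD'α, map_sub]
    · intro v
      show D (D' (β v)) - D' (D (β v)) = β (D (D' v) - D' (D v))
      rw [hD'β, hDβ, hDβ, hD'β, map_sub]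
    · intro v w
      show D (D' (br v w)) - D' (D (br v w)) = _
      rw [hD'br, hDbr, map_add, map_add, hDbr, hDbr, hD'br, hD'br]
      simp only [map_add, map_sub, LinearMap.add_apply, LinearMap.sub_apply,
        Module.End.mul_apply, hDγ', hD'γ, hγγ', hγ'γ]
      abel
  -- now extend by linearity
  intro D hD
  induction hD using Submodule.span_induction with
  | mem D hD =>
    intro D' hD'
    induction hD' using Submodule.span_induction with
    | mem D' hD' => exact Submodule.subset_span (key D hD D' hD')
    | zero => simp
    | add x y hx hy ihx ihy =>
      have : D * (x + y) - (x + y) * D = (D * x - x * D) + (D * y - y * D) := by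
        noncomm_ring
      rw [this]; exact Submodule.add_mem _ ihx ihy
    | smul c x hx ihx =>
      have : D * (c • x) - (c • x) * D = c • (D * x - x * D) := by
        rw [mul_smul_comm, smul_mul_assoc, smul_sub]
      rw [this]; exact Submodule.smul_mem _ c ihx
  | zero => intro D' _; simp
  | add x y hx hy ihx ihy =>
    intro D' hD'
    have : (x + y) * D' - D' * (x + y) = (x * D' - D' * x) + (y * D' - D' * y) := by
      noncomm_ring
    rw [this]; exact Submodule.add_mem _ (ihx D' hD') (ihy D' hD')
  | smul c x hx ihx =>
    intro D' hD'
    have : (c • x) * D' - D' * (c • x) = c • (x * D' - D' * x) := by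
      rw [mul_smul_comm, smul_mul_assoc, smul_sub]
    rw [this]; exact Submodule.smul_mem _ c (ihx D' hD')
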